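/- Let δ > 0 and k, l ∈ ℕ. Then there exists n_0 ∈ ℕ such that for every n ≥ n_0 and every subset A of [{1, …, n}]^k (the k-element subsets of {1, …, n}) of size at least δ·C(n, k) (where C(n, k) is the binomial coefficient), there exists a plegma family (s_j)_{j=1}^l in [ℕ]^k with s_j ∈ A for every 1 ≤ j ≤ l. -/

import Mathlib

/-- `s : Fin k → ℕ` is the increasing enumeration of a `k`-element subset of `M`. -/
def IsEnum (M : Set ℕ) {k : ℕ} (s : Fin k → ℕ) : Prop :=
  StrictMono s ∧ ∀ i, s i ∈ M

/-- `(p j)_{j=1,…,l}` is a plegma family in `[M]^k`. -/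
def IsPlegma (M : Set ℕ) {k l : ℕ} (p : Fin l → Fin k → ℕ) : Prop :=
  (∀ j, IsEnum M (p j)) ∧
  (∀ i : Fin k, StrictMono fun j : Fin l => p j i) ∧
  (∀ (i : Fin k) (hi : (i : ℕ) + 1 < k) (j j' : Fin l), p j i < p j' ⟨(i : ℕ) + 1, hi⟩)


open Finset

/-- From `l` elements in a common box on a common diagonal, build a plegma family. -/
lemma exists_plegma_of_fiber {K l : ℕ} (A : Finset (Fin (K+1) → ℕ))
    (hA : ∀ s ∈ A, StrictMono s) (m b : Fin K → ℕ)
    (F : Finset (Fin (K+1) → ℕ)) (hFA : F ⊆ A)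
    (hinc : ∀ s ∈ F, ∀ i : Fin K, s i.castSucc ≤ m i ∧ m i < s i.succ)
    (hfib : ∀ s ∈ F, ∀ i : Fin K, s i.succ - s 0 = b i)
    (hcard : l ≤ F.card) :
    ∃ p : Fin l → Fin (K+1) → ℕ, IsPlegma Set.univ p ∧ ∀ j, p j ∈ A := by
  classical
  set D : Fin (K+1) → ℕ := Fin.cases 0 b with hD
  have hrec : ∀ s ∈ F, ∀ i, s i = s 0 + D i := by
    intro s hs i
    induction i using Fin.cases with
    | zero => simp [hD]
    | succ j =>
      have h1 := hfib s hs j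
      have h2 : s 0 < s j.succ := hA s (hFA hs) (Fin.succ_pos j)
      simp only [hD, Fin.cases_succ]
      omega
  have hinj : Set.InjOn (fun s : Fin (K+1) → ℕ => s 0) (F : Set (Fin (K+1) → ℕ)) := by
    intro s hs t ht h0
    have h0' : s 0 = t 0 := h0
    funext i
    rw [hrec s hs i, hrec t ht i, h0']
  have hYcard : l ≤ (F.image (fun s => s 0)).card := by
    rwa [Finset.card_image_of_injOn hinj]
  obtain ⟨Z, hZY, hZcard⟩ := Finset.exists_subset_card_eq hYcard
  set e := Z.orderIsoOfFin hZcard with he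
  set p : Fin l → Fin (K+1) → ℕ := fun j i => (e j : ℕ) + D i with hp
  have hpF : ∀ j, p j ∈ F := by
    intro j
    have : (e j : ℕ) ∈ F.image (fun s => s 0) := hZY (e j).2
    obtain ⟨s, hs, hs0⟩ := Finset.mem_image.mp this
    have : p j = s := by
      funext i
      rw [hp]
      simp only
      rw [hrec s hs i, hs0]
    rw [this]; exact hs
  refine ⟨p, ⟨?_, ?_, ?_⟩, fun j => hFA (hpF j)⟩
  · intro j
    exact ⟨hA _ (hFA (hpF j)), fun _ => trivial⟩
  · intro i a a' haa'
    have : (e a : ℕ) < (e a' : ℕ) := e.strictMono haa'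
    simpa [hp] using Nat.add_lt_add_right this (D i)
  · intro i hi j j'
    have hiK : (i : ℕ) < K := Nat.lt_of_succ_lt_succ hi
    set i' : Fin K := ⟨(i : ℕ), hiK⟩ with hi'
    have e1 : i'.castSucc = i := by ext; rfl
    have e2 : i'.succ = (⟨(i : ℕ) + 1, hi⟩ : Fin (K+1)) := by ext; rfl
    have h1 := (hinc _ (hpF j) i').1
    have h2 := (hinc _ (hpF j') i').2
    rw [e1] at h1
    rw [e2] at h2
    exact lt_of_le_of_lt h1 h2

/-- bound on the number of sets with some small gap -/
lemma small_bound {K n g : ℕ} (A : Finset (Fin (K+1) → ℕ))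
    (hA : ∀ s ∈ A, StrictMono s ∧ ∀ i, s i ∈ Finset.Icc 1 n) :
    (A.filter (fun s => ¬ ∀ i : Fin K, g ≤ s i.succ - s i.castSucc)).card
      ≤ K * (g * n ^ K) := by
  classical
  have hsub : (A.filter (fun s => ¬ ∀ i : Fin K, g ≤ s i.succ - s i.castSucc)) ⊆
      (Finset.univ : Finset (Fin K)).biUnion
        (fun i => A.filter (fun s => s i.succ - s i.castSucc < g)) := by
    intro s hs
    rw [mem_filter] at hs
    obtain ⟨hsA, hs2⟩ := hs
    push_neg at hs2
    obtain ⟨i, hi⟩ := hs2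
    exact mem_biUnion.mpr ⟨i, mem_univ i, mem_filter.mpr ⟨hsA, hi⟩⟩
  refine (card_le_card hsub).trans ((card_biUnion_le).trans ?_)
  have hone : ∀ i : Fin K,
      (A.filter (fun s => s i.succ - s i.castSucc < g)).card ≤ g * n ^ K := by
    intro i
    have hcard : ((Finset.range g) ×ˢ (Fintype.piFinset fun j : Fin (K+1) =>
        if j = i.succ then ({0} : Finset ℕ) else Finset.Icc 1 n)).card = g * n ^ K := by
      rw [card_product, card_range, Fintype.card_piFinset]
      congr 1
      rw [← Finset.mul_prod_erase Finset.univ _ (mem_univ i.succ)]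
      rw [if_pos rfl, card_singleton, one_mul]
      rw [Finset.prod_congr rfl (fun j hj => ?_), Finset.prod_const,
        card_erase_of_mem (mem_univ _), card_univ, Fintype.card_fin]
      · rfl
      · rw [if_neg (Finset.mem_erase.mp hj).1, Nat.card_Icc]
        omega
    rw [← hcard]
    apply Finset.card_le_card_of_injOn
      (fun s => (s i.succ - s i.castSucc, Function.update s i.succ 0))
    · intro s hs
      rw [Finset.mem_coe, mem_filter] at hs
      obtain ⟨hsA, hslt⟩ := hs
      rw [Finset.mem_coe, Finset.mem_product]
      constructor
      · exact Finset.mem_range.mpr hslt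
      · rw [Fintype.mem_piFinset]
        intro j
        by_cases hj : j = i.succ
        · subst hj
          show Function.update s i.succ 0 i.succ ∈ _
          simp
        · show Function.update s i.succ 0 j ∈ (if j = i.succ then ({0} : Finset ℕ) else Finset.Icc 1 n)
          rw [if_neg hj, Function.update_of_ne hj]
          exact (hA s hsA).2 j
    · intro s hs t ht heq
      rw [Finset.mem_coe, mem_filter] at hs ht
      have hgap : s i.succ - s i.castSucc = t i.succ - t i.castSucc :=
        congrArg Prod.fst heq
      have hupd : Function.update s i.succ 0 = Function.update t i.succ 0 :=
        congrArg Prod.snd heq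
      have hne : i.castSucc ≠ i.succ := (Fin.castSucc_lt_succ (i := i)).ne
      funext j
      by_cases hj : j = i.succ
      · subst hj
        have hcs : s i.castSucc = t i.castSucc := by
          have := congrFun hupd i.castSucc
          rwa [Function.update_of_ne hne, Function.update_of_ne hne] at this
        have h1 : s i.castSucc ≤ s i.succ := ((hA s hs.1).1 (Fin.castSucc_lt_succ (i := i))).le
        have h2 : t i.castSucc ≤ t i.succ := ((hA t ht.1).1 (Fin.castSucc_lt_succ (i := i))).le
        omega
      · have := congrFun hupd j
        rwa [Function.update_of_ne hj, Function.update_of_ne hj] at this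
  calc ∑ i : Fin K, (A.filter (fun s => s i.succ - s i.castSucc < g)).card
      ≤ ∑ _i : Fin K, g * n ^ K := Finset.sum_le_sum (fun i _ => hone i)
    _ = K * (g * n ^ K) := by simp [Finset.sum_const, mul_comm]

/-- bound on the number of dense sets inside one box -/
lemma box_bound {K l n : ℕ} (A : Finset (Fin (K+1) → ℕ))
    (hA : ∀ s ∈ A, StrictMono s ∧ ∀ i, s i ∈ Finset.Icc 1 n)
    (hfree : ¬ ∃ p : Fin l → Fin (K+1) → ℕ, IsPlegma Set.univ p ∧ ∀ j, p j ∈ A)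
    (m : Fin K → ℕ) :
    (A.filter (fun s => ∀ i : Fin K, s i.castSucc ≤ m i ∧ m i < s i.succ)).card
      ≤ (l - 1) * n ^ K := by
  classical
  set S := A.filter (fun s => ∀ i : Fin K, s i.castSucc ≤ m i ∧ m i < s i.succ) with hS
  have hmaps : ∀ s ∈ S, (fun i : Fin K => s i.succ - s 0) ∈
      (Fintype.piFinset fun _ : Fin K => Finset.Icc 1 n) := by
    intro s hs
    rw [Fintype.mem_piFinset]
    intro i
    have hsA : s ∈ A := (mem_filter.mp hs).1
    have h1 : s 0 < s i.succ := (hA s hsA).1 (Fin.succ_pos i)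
    have h2 := Finset.mem_Icc.mp ((hA s hsA).2 i.succ)
    have h3 := Finset.mem_Icc.mp ((hA s hsA).2 0)
    rw [Finset.mem_Icc]
    omega
  have := Finset.card_le_mul_card_image_of_maps_to hmaps (l - 1) ?_
  · refine this.trans ?_
    rw [Fintype.card_piFinset]
    simp [Nat.card_Icc]
  · intro b hb
    by_contra hcon
    push_neg at hcon
    apply hfree
    refine exists_plegma_of_fiber A (fun s hs => (hA s hs).1) m b
      (S.filter (fun s => (fun i : Fin K => s i.succ - s 0) = b)) ?_ ?_ ?_ ?_
    · exact (Finset.filter_subset _ _).trans (Finset.filter_subset _ _)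
    · intro s hs
      exact (mem_filter.mp (mem_filter.mp hs).1).2
    · intro s hs i
      exact congrFun (mem_filter.mp hs).2 i
    · exact Nat.le_of_pred_lt hcon

/-- The key counting estimate. -/
lemma key_bound {K l n g : ℕ} (A : Finset (Fin (K+1) → ℕ))
    (hA : ∀ s ∈ A, StrictMono s ∧ ∀ i, s i ∈ Finset.Icc 1 n)
    (hfree : ¬ ∃ p : Fin l → Fin (K+1) → ℕ, IsPlegma Set.univ p ∧ ∀ j, p j ∈ A) :
    A.card * g ^ K ≤ K * (g * n ^ K) * g ^ K + n ^ K * ((l - 1) * n ^ K) := by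
  classical
  have hsplit := Finset.card_filter_add_card_filter_not
    (s := A) (p := fun s => ∀ i : Fin K, g ≤ s i.succ - s i.castSucc)
  have h1 := small_bound (g := g) A hA
  -- double counting for the spread part
  have h2 : (A.filter (fun s => ∀ i : Fin K, g ≤ s i.succ - s i.castSucc)).card * g ^ K
      ≤ n ^ K * ((l - 1) * n ^ K) := by
    have hdc := Finset.card_mul_le_card_mul
      (r := fun (s : Fin (K+1) → ℕ) (m : Fin K → ℕ) =>
        ∀ i : Fin K, s i.castSucc ≤ m i ∧ m i < s i.succ)
      (s := A.filter (fun s => ∀ i : Fin K, g ≤ s i.succ - s i.castSucc))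
      (t := Fintype.piFinset fun _ : Fin K => Finset.Icc 1 n)
      (m := g ^ K) (n := (l - 1) * n ^ K) ?_ ?_
    · refine hdc.trans ?_
      apply Nat.mul_le_mul_right
      rw [Fintype.card_piFinset]
      simp [Nat.card_Icc]
    · -- lower bound: each spread s is in many boxes
      intro s hs
      rw [mem_filter] at hs
      obtain ⟨hsA, hgap⟩ := hs
      clear hsplit h1 hfree
      have hsub : (Fintype.piFinset fun i : Fin K =>
          Finset.Icc (s i.castSucc) (s i.succ - 1)) ⊆
          Finset.bipartiteAbove (fun (s : Fin (K+1) → ℕ) (m : Fin K → ℕ) =>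
            ∀ i : Fin K, s i.castSucc ≤ m i ∧ m i < s i.succ)
            (Fintype.piFinset fun _ : Fin K => Finset.Icc 1 n) s := by
        intro x hx
        rw [Fintype.mem_piFinset] at hx
        rw [Finset.bipartiteAbove, mem_filter]
        constructor
        · rw [Fintype.mem_piFinset]
          intro i
          have hxi := Finset.mem_Icc.mp (hx i)
          have hlo := Finset.mem_Icc.mp ((hA s hsA).2 i.castSucc)
          have hhi := Finset.mem_Icc.mp ((hA s hsA).2 i.succ)
          rw [Finset.mem_Icc]
          omega
        · intro i
          have hxi := Finset.mem_Icc.mp (hx i)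
          have hhi := Finset.mem_Icc.mp ((hA s hsA).2 i.succ)
          omega
      refine le_trans ?_ (Finset.card_le_card hsub)
      rw [Fintype.card_piFinset]
      have : ∀ i ∈ (Finset.univ : Finset (Fin K)),
          g ≤ (Finset.Icc (s i.castSucc) (s i.succ - 1)).card := by
        intro i _
        rw [Nat.card_Icc]
        have hhi := Finset.mem_Icc.mp ((hA s hsA).2 i.succ)
        have := hgap i
        omega
      calc g ^ K = g ^ (Finset.univ : Finset (Fin K)).card := by
            rw [card_univ, Fintype.card_fin]
        _ ≤ _ := Finset.pow_card_le_prod _ _ _ this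
    · -- upper bound: each box contains few spread elements
      intro m hm
      refine le_trans (Finset.card_le_card ?_) (box_bound A hA hfree m)
      intro x hx
      rw [Finset.bipartiteBelow, mem_filter] at hx
      rw [mem_filter]
      exact ⟨(mem_filter.mp hx.1).1, hx.2⟩
  calc A.card * g ^ K
      = (A.filter (fun s => ∀ i : Fin K, g ≤ s i.succ - s i.castSucc)).card * g ^ K
        + (A.filter (fun s => ¬ ∀ i : Fin K, g ≤ s i.succ - s i.castSucc)).card * g ^ K := by
        rw [← Nat.add_mul, hsplit]
    _ ≤ n ^ K * ((l - 1) * n ^ K) + K * (g * n ^ K) * g ^ K := by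
        exact Nat.add_le_add h2 (Nat.mul_le_mul_right _ h1)
    _ = K * (g * n ^ K) * g ^ K + n ^ K * ((l - 1) * n ^ K) := by ring

set_option maxHeartbeats 1000000 in
theorem statement16 (δ : ℝ) (hδ : 0 < δ) (k l : ℕ) :
    ∃ n₀ : ℕ, ∀ n ≥ n₀, ∀ A : Finset (Fin k → ℕ),
      (∀ s ∈ A, StrictMono s ∧ ∀ i, s i ∈ Finset.Icc 1 n) →
      δ * (n.choose k : ℝ) ≤ (A.card : ℝ) →
      ∃ p : Fin l → Fin k → ℕ, IsPlegma Set.univ p ∧ ∀ j, p j ∈ A := by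
  classical
  obtain rfl | hl := Nat.eq_zero_or_pos l
  · -- trivial case l = 0
    refine ⟨0, fun n _ A _ _ => ⟨Fin.elim0, ⟨fun j => j.elim0, ?_, fun i hi j => j.elim0⟩,
      fun j => j.elim0⟩⟩
    intro i a b h
    exact a.elim0
  cases k with
  | zero =>
    refine ⟨0, fun n _ A hA hcard => ?_⟩
    rcases Finset.eq_empty_or_nonempty A with rfl | ⟨s, hs⟩
    · exfalso
      simp only [Nat.choose_zero_right, Nat.cast_one, mul_one, Finset.card_empty,
        Nat.cast_zero] at hcard
      linarith
    · refine ⟨fun _ => s, ⟨fun j => ⟨(hA s hs).1, fun i => trivial⟩,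
        fun i => i.elim0, fun i => i.elim0⟩, fun _ => hs⟩
  | succ K =>
    set F : ℝ := ((K+1).factorial : ℝ) with hFdef
    have hF : (0:ℝ) < F := by
      rw [hFdef]; exact_mod_cast Nat.factorial_pos _
    set Q : ℝ := 2 ^ (K+2) * F with hQdef
    have hQ : 0 < Q := by positivity
    set E : ℝ := Q * (K+1) with hEdef
    have hE : 0 < E := by positivity
    set c : ℕ := ⌈E / δ⌉₊ + 1 with hcdef
    have hc : 0 < c := Nat.succ_pos _
    have hcR : (0:ℝ) < c := by exact_mod_cast hc
    have hcE : E ≤ δ * c := by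
      have h1 : E / δ ≤ (⌈E / δ⌉₊ : ℝ) := Nat.le_ceil _
      have h2 : ((⌈E/δ⌉₊ : ℕ) : ℝ) ≤ (c : ℝ) := by
        rw [hcdef]; push_cast; linarith
      have h3 : E / δ ≤ (c : ℝ) := h1.trans h2
      calc E = (E / δ) * δ := by field_simp
        _ ≤ (c : ℝ) * δ := mul_le_mul_of_nonneg_right h3 hδ.le
        _ = δ * c := mul_comm _ _
    refine ⟨max (max (2*c) (2*K+2)) (⌈(l:ℝ) * E * (2*c)^K / δ⌉₊ + 1), ?_⟩
    intro n hn A hA hcard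
    by_contra hfree
    have hkey := key_bound (g := n / c) A hA hfree
    have hn1 : 2*c ≤ n := le_trans (le_trans (le_max_left _ _) (le_max_left _ _)) hn
    have hn2 : 2*K+2 ≤ n := le_trans (le_trans (le_max_right _ _) (le_max_left _ _)) hn
    have hn3' : ⌈(l:ℝ) * E * (2*c)^K / δ⌉₊ + 1 ≤ n := le_trans (le_max_right _ _) hn
    set N : ℝ := (n : ℝ) with hNdef
    have hNpos : (0:ℝ) < N := by
      rw [hNdef]
      have : 0 < n := by omega
      exact_mod_cast this
    have hn3 : (l:ℝ) * E * (2*c)^K / δ < N := by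
      refine lt_of_le_of_lt (Nat.le_ceil _) ?_
      rw [hNdef]
      have : (⌈(l:ℝ) * E * (2*c)^K / δ⌉₊ : ℝ) + 1 ≤ (n:ℝ) := by exact_mod_cast hn3'
      linarith
    set G : ℝ := ((n / c : ℕ) : ℝ) with hGdef
    have hG0 : (0:ℝ) ≤ G := by rw [hGdef]; positivity
    have hGc : G * c ≤ N := by
      rw [hGdef, hNdef]; exact_mod_cast Nat.div_mul_le_self n c
    have hGc2 : N < (c:ℝ) * G + c := by
      have h : n < c * (n / c) + c := by
        have h1 := Nat.div_add_mod n c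
        have h2 := Nat.mod_lt n hc
        omega
      rw [hGdef, hNdef]
      exact_mod_cast h
    have h2c : 2*(c:ℝ) ≤ N := by rw [hNdef]; exact_mod_cast hn1
    have hG_lb : N / (2*c) ≤ G := by
      rw [div_le_iff₀ (by positivity)]
      nlinarith
    have hGub : G ≤ N / c := by
      rw [le_div_iff₀ hcR]
      linarith
    have hchoose : (N/2)^(K+1) ≤ F * (n.choose (K+1) : ℝ) := by
      have h1 : (n + 1 - (K+1))^(K+1) ≤ (K+1).factorial * n.choose (K+1) := by
        rw [← Nat.descFactorial_eq_factorial_mul_choose]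
        exact Nat.pow_sub_le_descFactorial n (K+1)
      have hKn : K + 1 ≤ n + 1 := by omega
      have h2 : ((n + 1 - (K+1) : ℕ) : ℝ) = N - K := by
        rw [Nat.cast_sub hKn, hNdef]; push_cast; ring
      have h3 : N/2 ≤ N - K := by
        have : (2*(K:ℝ)+2) ≤ N := by rw [hNdef]; exact_mod_cast hn2
        linarith
      calc (N/2)^(K+1) ≤ (N-K)^(K+1) := pow_le_pow_left₀ (by positivity) h3 _
        _ = ((n + 1 - (K+1) : ℕ) : ℝ)^(K+1) := by rw [h2]
        _ ≤ F * (n.choose (K+1) : ℝ) := by rw [hFdef]; exact_mod_cast h1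
    set L : ℝ := ((l - 1 : ℕ) : ℝ) with hLdef
    have hL0 : (0:ℝ) ≤ L := by rw [hLdef]; positivity
    have hL : L ≤ (l:ℝ) := by rw [hLdef]; exact_mod_cast Nat.sub_le l 1
    have hkeyR : (A.card : ℝ) * G^K ≤ K * (G * N^K) * G^K + N^K * (L * N^K) := by
      rw [hGdef, hNdef, hLdef]
      exact_mod_cast hkey
    have hmain : δ * (n.choose (K+1) : ℝ) * G^K ≤ K * (G * N^K) * G^K + N^K * (L * N^K) :=
      le_trans (mul_le_mul_of_nonneg_right hcard (by positivity)) hkeyR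
    have hlhs : δ * ((N/2)^(K+1)/F) * G^K ≤ δ * (n.choose (K+1) : ℝ) * G^K := by
      have hCF : (N/2)^(K+1)/F ≤ (n.choose (K+1) : ℝ) := by
        rw [div_le_iff₀ hF]
        linarith
      gcongr
    have e1 : δ * ((N/2)^(K+1)/F) * G^K / 2 = (δ/Q) * (N^(K+1) * G^K) := by
      rw [hQdef, div_pow]
      field_simp
      ring
    have hT1 : (K:ℝ) * (G * N^K) * G^K ≤ δ * ((N/2)^(K+1)/F) * G^K / 2 := by
      rw [e1]
      have step1 : (K:ℝ) * (G * N^K) * G^K ≤ ((K:ℝ)/c) * (N^(K+1) * G^K) := by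
        have h' : (K:ℝ) * (G * N^K) * G^K ≤ (K:ℝ) * ((N/c) * N^K) * G^K := by
          gcongr
        refine h'.trans (le_of_eq ?_)
        field_simp
        ring
      refine step1.trans ?_
      have hKQ : (K:ℝ)/c ≤ δ/Q := by
        rw [div_le_div_iff₀ hcR hQ]
        have hKQE : (K:ℝ) * Q ≤ E := by
          rw [hEdef, mul_comm]
          have : (K:ℝ) ≤ (K:ℝ) + 1 := by linarith
          exact mul_le_mul_of_nonneg_left this hQ.le
        linarith
      exact mul_le_mul_of_nonneg_right hKQ (by positivity)
    have hT2 : N^K * (L * N^K) < δ * ((N/2)^(K+1)/F) * G^K / 2 := by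
      rw [e1]
      have hlt : (l:ℝ) * (Q * (2*c)^K) < δ * N := by
        have h' : (l:ℝ) * E * (2*c)^K < δ * N := by
          rw [div_lt_iff₀ hδ] at hn3
          linarith
        have hQE : Q ≤ E := by
          rw [hEdef]
          nlinarith [hQ.le]
        have hlR : (0:ℝ) ≤ (l:ℝ) := by positivity
        calc (l:ℝ) * (Q * (2*c)^K) ≤ (l:ℝ) * (E * (2*c)^K) := by gcongr
          _ = (l:ℝ) * E * (2*c)^K := by ring
          _ < δ * N := h'
      have hmid : (l:ℝ) * N^(2*K) < (δ/Q) * (N^(K+1) * (N/(2*c))^K) := by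
        have heq : (δ/Q) * (N^(K+1) * (N/(2*c))^K) = (δ * N / (Q * (2*c)^K)) * N^(2*K) := by
          rw [div_pow]
          field_simp
          ring
        rw [heq]
        have hl' : (l:ℝ) < δ * N / (Q * (2*c)^K) := by
          rw [lt_div_iff₀ (by positivity)]
          linarith
        exact mul_lt_mul_of_pos_right hl' (by positivity)
      have hstart : N^K * (L * N^K) ≤ (l:ℝ) * N^(2*K) := by
        have : N^K * (L * N^K) = L * N^(2*K) := by
          rw [two_mul, pow_add]
          ring
        rw [this]
        exact mul_le_mul_of_nonneg_right hL (by positivity)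
      have hend : (δ/Q) * (N^(K+1) * (N/(2*c))^K) ≤ (δ/Q) * (N^(K+1) * G^K) := by
        gcongr
      linarith
    linarith
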